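/- arXiv:2003.07777 — 2 statements merged into one kernel-verified Lean document; each statement's English description precedes it below -/
import Mathlib

section
/- For every t > 0, the row sums of the matrix exponential are bounded uniformly in the row index: for every i ∈ ℤ, Σ_{j ∈ ℤ} (e^{tA})_{ij} ≤ C₃(t), where C₃(t) = 1 + C₁ t e^{αβt²} + C₂ (e^{αβt²} − 1) + (C₂ + C₁ t²)(4αβt² + 2) e^{αβt²}. In particular, for every bounded function φ : ℤ → ℝ the function i ↦ Σ_{j ∈ ℤ} (e^{tA})_{ij} φ(j) is well defined and bounded. -/
/-- The dispersal matrix `A = (a_{ij})_{i,j ∈ ℤ}`: `a_{ij} = β` if `j = i ± 1` and `i` even,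
`a_{ij} = α` if `j = i ± 1` and `i` odd, and `a_{ij} = 0` otherwise. -/
noncomputable def matA (α β : ℝ) (i j : ℤ) : ℝ :=
  if j = i + 1 ∨ j = i - 1 then (if Even i then β else α) else 0

/-- Entrywise matrix powers: `(A⁰)_{ij} = δ_{ij}` and `(A^{n+1})_{ij} = Σ_{k ∈ ℤ} (Aⁿ)_{ik} a_{kj}`. -/
noncomputable def matApow (α β : ℝ) : ℕ → ℤ → ℤ → ℝ
  | 0 => fun i j => if i = j then 1 else 0
  | n + 1 => fun i j => ∑' k : ℤ, matApow α β n i k * matA α β k j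

/-- The matrix exponential, entrywise: . -/
noncomputable def matExp (α β t : ℝ) (i j : ℤ) : ℝ :=
  ∑' n : ℕ, t ^ n * matApow α β n i j / (n.factorial : ℝ)

lemma matA_nonneg {α β : ℝ} (hα : 0 ≤ α) (hβ : 0 ≤ β) (i j : ℤ) : 0 ≤ matA α β i j := by
  unfold matA; split
  · split <;> assumption
  · exact le_refl 0

lemma matApow_succ (α β : ℝ) (n : ℕ) (i j : ℤ) :
    matApow α β (n+1) i j =
      matApow α β n i (j-1) * matA α β (j-1) j + matApow α β n i (j+1) * matA α β (j+1) j := by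
  show (∑' k : ℤ, matApow α β n i k * matA α β k j) = _
  rw [tsum_eq_sum (s := ({j-1, j+1} : Finset ℤ)) ?_]
  · rw [Finset.sum_pair (by omega)]
  · intro k hk
    have h1 : ¬(j = k + 1 ∨ j = k - 1) := by
      simp only [Finset.mem_insert, Finset.mem_singleton] at hk
      omega
    simp [matA, h1]

lemma matApow_nonneg {α β : ℝ} (hα : 0 ≤ α) (hβ : 0 ≤ β) (n : ℕ) (i j : ℤ) :
    0 ≤ matApow α β n i j := by
  induction n generalizing j with
  | zero => simp only [matApow]; split <;> norm_num
  | succ n ih =>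
    rw [matApow_succ]
    exact add_nonneg (mul_nonneg (ih _) (matA_nonneg hα hβ _ _))
      (mul_nonneg (ih _) (matA_nonneg hα hβ _ _))

lemma matApow_parity (α β : ℝ) (n : ℕ) (i j : ℤ) (h : matApow α β n i j ≠ 0) :
    (i + j + n) % 2 = 0 := by
  induction n generalizing j with
  | zero =>
    simp only [matApow, ne_eq, ite_eq_right_iff, not_forall] at h
    obtain ⟨rfl, -⟩ := h
    omega
  | succ n ih =>
    rw [matApow_succ] at h
    have h2 : matApow α β n i (j-1) * matA α β (j-1) j ≠ 0 ∨
        matApow α β n i (j+1) * matA α β (j+1) j ≠ 0 := by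
      by_contra hc
      push_neg at hc
      exact h (by rw [hc.1, hc.2]; ring)
    rcases h2 with h2 | h2
    · have := ih _ (left_ne_zero_of_mul h2)
      push_cast at this ⊢
      omega
    · have := ih _ (left_ne_zero_of_mul h2)
      push_cast at this ⊢
      omega

lemma matApow_hasSum {α β : ℝ} (n : ℕ) (i : ℤ) :
    HasSum (fun j => matApow α β n i j)
      ((4*α*β)^(n/2) * (if Even n then 1 else (if Even i then 2*β else 2*α))) := by
  induction n with
  | zero =>
    have he : (fun j : ℤ => matApow α β 0 i j) = fun j => if j = i then (1:ℝ) else 0 := by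
      funext j; simp [matApow, eq_comm]
    rw [he]
    simpa using hasSum_ite_eq i (1:ℝ)
  | succ n ih =>
    set d : ℝ := if Even (i + (n:ℤ)) then β else α with hd
    have key : ∀ j : ℤ, matApow α β (n+1) i j =
        matApow α β n i (j-1) * d + matApow α β n i (j+1) * d := by
      intro j
      rw [matApow_succ]
      congr 1
      · by_cases h0 : matApow α β n i (j-1) = 0
        · rw [h0]; ring
        · have hp := matApow_parity α β n i (j-1) h0
          have hA : matA α β (j-1) j = if Even (j-1) then β else α := by
            unfold matA; rw [if_pos (Or.inl (by ring))]
          rw [hA, hd]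
          congr 1
          have hiff : Even (j-1) ↔ Even (i + (n:ℤ)) := by
            rw [Int.even_iff, Int.even_iff]; omega
          exact if_congr hiff rfl rfl
      · by_cases h0 : matApow α β n i (j+1) = 0
        · rw [h0]; ring
        · have hp := matApow_parity α β n i (j+1) h0
          have hA : matA α β (j+1) j = if Even (j+1) then β else α := by
            unfold matA; rw [if_pos (Or.inr (by ring))]
          rw [hA, hd]
          congr 1
          have hiff : Even (j+1) ↔ Even (i + (n:ℤ)) := by
            rw [Int.even_iff, Int.even_iff]; omega
          exact if_congr hiff rfl rfl
    set S : ℝ := (4*α*β)^(n/2) * (if Even n then 1 else (if Even i then 2*β else 2*α)) with hS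
    have h1 : HasSum (fun j : ℤ => matApow α β n i (j-1) * d) (S*d) := by
      have := (Equiv.subRight (1:ℤ)).hasSum_iff.2 (ih.mul_right d)
      simpa [Function.comp_def] using this
    have h2 : HasSum (fun j : ℤ => matApow α β n i (j+1) * d) (S*d) := by
      have := (Equiv.addRight (1:ℤ)).hasSum_iff.2 (ih.mul_right d)
      simpa [Function.comp_def] using this
    have h3 := h1.add h2
    have he : (fun j => matApow α β (n+1) i j) =
        fun j => matApow α β n i (j-1) * d + matApow α β n i (j+1) * d := funext key
    rw [he]
    convert h3 using 1
    rcases Nat.even_or_odd n with hn | hn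
    · obtain ⟨m, rfl⟩ := hn
      have e1 : (m+m)/2 = m := by omega
      have e2 : (m+m+1)/2 = m := by omega
      have e3 : Even (m+m) := ⟨m, rfl⟩
      have e4 : ¬ Even (m+m+1) := by simp [Nat.even_add_one, e3]
      have e5 : Even (i + ((m+m : ℕ):ℤ)) ↔ Even i := by
        rw [Int.even_iff, Int.even_iff]; omega
      rw [hS, hd, e1, e2, if_pos e3, if_neg e4, if_congr e5 rfl rfl]
      by_cases hi : Even i <;> simp [hi] <;> ring
    · obtain ⟨m, rfl⟩ := hn
      have e1 : (2*m+1)/2 = m := by omega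
      have e2 : (2*m+1+1)/2 = m+1 := by omega
      have e3 : ¬ Even (2*m+1) := by simp [Nat.even_add_one, parity_simps]
      have e4 : Even (2*m+1+1) := ⟨m+1, by ring⟩
      have e5 : Even (i + ((2*m+1 : ℕ):ℤ)) ↔ ¬ Even i := by
        rw [Int.even_iff, Int.even_iff]; omega
      rw [hS, hd, e1, e2, if_neg e3, if_pos e4, if_congr e5 rfl rfl]
      by_cases hi : Even i <;> simp [hi] <;> ring

lemma four_pow_fact (m : ℕ) : 4^m * (m.factorial * m.factorial) ≤ (2*m+1).factorial := by
  induction m with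
  | zero => simp
  | succ m ih =>
    have h2 : (2*(m+1)+1).factorial = (2*m+3) * ((2*m+2) * (2*m+1).factorial) := by
      have e : 2*(m+1)+1 = (2*m+2)+1 := by ring
      rw [e, Nat.factorial_succ, show 2*m+2 = (2*m+1)+1 from by ring, Nat.factorial_succ]
    calc 4^(m+1) * ((m+1).factorial * (m+1).factorial)
        = (4*(m+1)*(m+1)) * (4^m * (m.factorial * m.factorial)) := by
          rw [Nat.factorial_succ]; ring
      _ ≤ (4*(m+1)*(m+1)) * (2*m+1).factorial := Nat.mul_le_mul_left _ ih
      _ ≤ ((2*m+3)*(2*m+2)) * (2*m+1).factorial := by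
          apply Nat.mul_le_mul_right; nlinarith
      _ = (2*(m+1)+1).factorial := by rw [h2]; ring

lemma four_pow_fact_real (m : ℕ) : (4:ℝ)^m * m.factorial ≤ (2*m+1).factorial := by
  have h2 : 4^m * m.factorial ≤ (2*m+1).factorial := by
    calc 4^m * m.factorial ≤ 4^m * (m.factorial * m.factorial) :=
          Nat.mul_le_mul_left _ (Nat.le_mul_of_pos_left _ m.factorial_pos)
      _ ≤ _ := four_pow_fact m
  exact_mod_cast h2

lemma real_ineq1 (x : ℝ) (hx : 0 ≤ x) (m : ℕ) :
    (4:ℝ)^m * x^m / (2*m).factorial ≤ (2*m+1) * x^m / m.factorial := by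
  rw [div_le_div_iff₀ (by positivity) (by positivity)]
  have key := four_pow_fact_real m
  have hfac : ((2*m+1).factorial : ℝ) = (2*m+1) * (2*m).factorial := by
    rw [show 2*m+1 = (2*m)+1 from rfl, Nat.factorial_succ]; push_cast; ring
  rw [hfac] at key
  have hxm : (0:ℝ) ≤ x^m := by positivity
  nlinarith [mul_le_mul_of_nonneg_right key hxm]

lemma real_ineq2 (x : ℝ) (hx : 0 ≤ x) (m : ℕ) :
    (4:ℝ)^m * x^m / (2*m+1).factorial ≤ x^m / m.factorial := by
  rw [div_le_div_iff₀ (by positivity) (by positivity)]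
  have key := four_pow_fact_real m
  have hxm : (0:ℝ) ≤ x^m := by positivity
  nlinarith [mul_le_mul_of_nonneg_right key hxm]

lemma hasSum_exp' (x : ℝ) : HasSum (fun n : ℕ => x ^ n / n.factorial) (Real.exp x) := by
  rw [Real.exp_eq_exp_ℝ]; exact NormedSpace.expSeries_div_hasSum_exp x

lemma hasSum_mexp (x : ℝ) :
    HasSum (fun m : ℕ => (m:ℝ) * x^m / m.factorial) (x * Real.exp x) := by
  have h1 : HasSum (fun m : ℕ => ((m:ℝ)+1) * x^(m+1) / (m+1).factorial) (x * Real.exp x) := by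
    have h : HasSum (fun i : ℕ => x * (x ^ i / ↑i.factorial)) (x * Real.exp x) := (hasSum_exp' x).mul_left x
    convert h using 2 with m
    rw [Nat.factorial_succ]
    have hm : ((m:ℝ)+1) ≠ 0 := by positivity
    have hf : (m.factorial : ℝ) ≠ 0 := by positivity
    push_cast
    field_simp
    ring
  have h2 := (hasSum_nat_add_iff (f := fun m : ℕ => (m:ℝ) * x^m / m.factorial) 1).1
    (by convert h1 using 2 with m; rfl; push_cast; ring_nf)
  simpa using h2

lemma row_bound (α β : ℝ) (hα : 0 < α) (hβ : 0 < β) (C₁ : ℝ) (hC₁pos : 0 < C₁)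
    (hci : ∀ k : ℤ, (if Even k then 2*β else 2*α) ≤ C₁)
    (t : ℝ) (ht : 0 < t) (i : ℤ) :
    Summable (fun j : ℤ => matExp α β t i j) ∧
    (∑' j : ℤ, matExp α β t i j) ≤
      (2*((α*β*t^2) * Real.exp (α*β*t^2)) + Real.exp (α*β*t^2))
        + C₁*t*Real.exp (α*β*t^2) := by
  set x : ℝ := α*β*t^2 with hxdef
  have hx : 0 ≤ x := by positivity
  set g : ℕ → ℝ := fun n => t^n *
      ((4*α*β)^(n/2) * (if Even n then 1 else (if Even i then 2*β else 2*α))) / n.factorial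
    with hg
  have hgrow : ∀ n : ℕ, HasSum (fun j : ℤ => t^n * matApow α β n i j / n.factorial) (g n) :=
    fun n => ((matApow_hasSum n i).mul_left (t^n)).div_const _
  set h : ℕ → ℝ := fun n => if Even n then ((2*(n/2)+1 : ℕ) : ℝ) * x^(n/2)/(n/2).factorial
      else C₁*t*(x^(n/2)/(n/2).factorial) with hh
  have hgh : ∀ n, g n ≤ h n := by
    intro n
    rcases Nat.even_or_odd n with hn | hn
    · obtain ⟨m, rfl⟩ := hn
      have e1 : (m+m)/2 = m := by omega
      have e3 : Even (m+m) := ⟨m, rfl⟩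
      rw [hg, hh]
      dsimp only
      rw [e1, if_pos e3, if_pos e3, show m + m = 2*m from by ring]
      have erw : t^(2*m) * ((4*α*β)^m * 1) = 4^m * x^m := by rw [hxdef]; ring
      rw [erw]
      have := real_ineq1 x hx m
      push_cast at this ⊢
      linarith
    · obtain ⟨m, rfl⟩ := hn
      have e1 : (2*m+1)/2 = m := by omega
      have e3 : ¬ Even (2*m+1) := by simp [Nat.even_add_one, parity_simps]
      rw [hg, hh]
      dsimp only
      rw [e1, if_neg e3, if_neg e3]
      have step1 : t^(2*m+1) * ((4*α*β)^m * (if Even i then 2*β else 2*α))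
            / ((2*m+1).factorial : ℝ)
          = (if Even i then 2*β else 2*α) * t * ((4:ℝ)^m * x^m / (2*m+1).factorial) := by
        rw [hxdef]; ring
      rw [step1]
      have h4 := real_ineq2 x hx m
      have hterm : (0:ℝ) ≤ (4:ℝ)^m * x^m / (2*m+1).factorial := by positivity
      calc (if Even i then 2*β else 2*α) * t * ((4:ℝ)^m * x^m / (2*m+1).factorial)
          ≤ C₁ * t * ((4:ℝ)^m * x^m / (2*m+1).factorial) := by
            apply mul_le_mul_of_nonneg_right _ hterm
            exact mul_le_mul_of_nonneg_right (hci i) ht.le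
        _ ≤ C₁*t*(x^m/m.factorial) := by
            apply mul_le_mul_of_nonneg_left h4 (by positivity)
  have heven : HasSum (fun m : ℕ => h (2*m)) (2*(x*Real.exp x) + Real.exp x) := by
    have hmodel : HasSum (fun m : ℕ => 2*((m:ℝ)*x^m/m.factorial) + x^m/m.factorial)
        (2*(x*Real.exp x) + Real.exp x) := ((hasSum_mexp x).mul_left 2).add (hasSum_exp' x)
    have hp : (fun m : ℕ => 2*((m:ℝ)*x^m/m.factorial) + x^m/m.factorial)
        = fun m : ℕ => h (2*m) := by
      funext m
      rw [hh]
      dsimp only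
      have e1 : (2*m)/2 = m := by omega
      rw [if_pos ⟨m, two_mul m⟩, e1]
      push_cast
      field_simp
    rwa [hp] at hmodel
  have hodd : HasSum (fun m : ℕ => h (2*m+1)) (C₁*t*Real.exp x) := by
    have hmodel : HasSum (fun m : ℕ => C₁*t*(x^m/m.factorial)) (C₁*t*Real.exp x) := by
      have := (hasSum_exp' x).mul_left (C₁*t)
      convert this using 2 with m
    have hp : (fun m : ℕ => C₁*t*(x^m/m.factorial)) = fun m : ℕ => h (2*m+1) := by
      funext m
      rw [hh]
      dsimp only
      have e1 : (2*m+1)/2 = m := by omega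
      have e3 : ¬ Even (2*m+1) := by simp [Nat.even_add_one, parity_simps]
      rw [if_neg e3, e1]
    rwa [hp] at hmodel
  have hhsum : HasSum h ((2*(x*Real.exp x) + Real.exp x) + C₁*t*Real.exp x) :=
    heven.even_add_odd hodd
  have hg0 : ∀ n, 0 ≤ g n := by
    intro n
    rw [hg]
    dsimp only
    have hif : 0 ≤ (if Even n then (1:ℝ) else (if Even i then 2*β else 2*α)) := by
      split_ifs <;> positivity
    apply div_nonneg _ (by positivity)
    exact mul_nonneg (by positivity) (mul_nonneg (by positivity) hif)
  have hgsum : Summable g := Summable.of_nonneg_of_le hg0 hgh hhsum.summable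
  set F : ℕ × ℤ → ℝ := fun p => t^p.1 * matApow α β p.1 i p.2 / (p.1).factorial with hF
  have hF0 : (0 : ℕ × ℤ → ℝ) ≤ F := by
    intro p
    have := matApow_nonneg hα.le hβ.le p.1 i p.2
    simp only [hF, Pi.zero_apply]
    positivity
  have hFrow : ∀ n : ℕ, HasSum (fun j : ℤ => F (n, j)) (g n) := fun n => hgrow n
  have hFsum : Summable F := by
    rw [summable_prod_of_nonneg hF0]
    refine ⟨fun n => (hFrow n).summable, ?_⟩
    have : (fun n : ℕ => ∑' j : ℤ, F (n, j)) = g := funext fun n => (hFrow n).tsum_eq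
    rw [this]
    exact hgsum
  have hswap : Summable (fun p : ℤ × ℕ => F p.swap) := hFsum.prod_symm
  have hrowS : Summable (fun j : ℤ => ∑' n : ℕ, F (n, j)) :=
    ((summable_prod_of_nonneg (fun p => hF0 p.swap)).1 hswap).2
  have hmE : (fun j : ℤ => matExp α β t i j) = fun j : ℤ => ∑' n : ℕ, F (n, j) := rfl
  constructor
  · rw [hmE]; exact hrowS
  · have hcomm : ∑' j : ℤ, ∑' n : ℕ, F (n, j) = ∑' n : ℕ, ∑' j : ℤ, F (n, j) :=
      Summable.tsum_comm (f := fun (n : ℕ) (j : ℤ) => F (n, j)) hFsum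
    have hrw : (∑' j : ℤ, matExp α β t i j) = ∑' n : ℕ, g n := by
      rw [hmE, hcomm]
      exact tsum_congr fun n => (hFrow n).tsum_eq
    rw [hrw]
    calc ∑' n : ℕ, g n ≤ ∑' n : ℕ, h n := Summable.tsum_le_tsum hgh hgsum hhsum.summable
      _ = _ := hhsum.tsum_eq

set_option maxHeartbeats 1000000 in
/-- With `C₁ = 2 max{√(β/α), √(α/β)} max{α, β}`, `C₂ = C₁ (αβ)^{−1/2}` and
`C₃(t) = 1 + C₁ t e^{αβt²} + C₂(e^{αβt²} − 1) + (C₂ + C₁ t²)(4αβt² + 2) e^{αβt²}`: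
for every `t > 0`, each row of `e^{tA}` is summable with sum at most `C₃(t)` (uniformly in the
row index `i`), and for every bounded `φ : ℤ → ℝ` the function
`i ↦ Σ_{j ∈ ℤ} (e^{tA})_{ij} φ(j)` is well defined and bounded. -/
theorem matExp_row_sum_bound (α β : ℝ) (hα : 0 < α) (hβ : 0 < β)
    (C₁ C₂ : ℝ)
    (hC₁ : C₁ = 2 * max (Real.sqrt (β / α)) (Real.sqrt (α / β)) * max α β)
    (hC₂ : C₂ = C₁ * (α * β) ^ ((-(1 : ℝ)) / 2))
    (C₃ : ℝ → ℝ)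
    (hC₃ : ∀ t : ℝ, C₃ t = 1 + C₁ * t * Real.exp (α * β * t ^ 2)
        + C₂ * (Real.exp (α * β * t ^ 2) - 1)
        + (C₂ + C₁ * t ^ 2) * (4 * α * β * t ^ 2 + 2) * Real.exp (α * β * t ^ 2))
    (t : ℝ) (ht : 0 < t) :
    (∀ i : ℤ, Summable (fun j : ℤ => matExp α β t i j) ∧
        (∑' j : ℤ, matExp α β t i j) ≤ C₃ t) ∧
    ∀ φ : ℤ → ℝ, (∃ M : ℝ, ∀ i : ℤ, |φ i| ≤ M) →
      (∀ i : ℤ, Summable (fun j : ℤ => matExp α β t i j * φ j)) ∧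
      ∃ M : ℝ, ∀ i : ℤ, |∑' j : ℤ, matExp α β t i j * φ j| ≤ M := by
  -- constants
  have hmaxpos : 0 < max α β := lt_of_lt_of_le hα (le_max_left _ _)
  have hM1 : (1:ℝ) ≤ max (Real.sqrt (β / α)) (Real.sqrt (α / β)) := by
    rcases le_total α β with hab | hab
    · have h1 : (1:ℝ) ≤ β/α := (one_le_div hα).2 hab
      calc (1:ℝ) = Real.sqrt 1 := Real.sqrt_one.symm
        _ ≤ Real.sqrt (β/α) := Real.sqrt_le_sqrt h1
        _ ≤ _ := le_max_left _ _
    · have h1 : (1:ℝ) ≤ α/β := (one_le_div hβ).2 hab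
      calc (1:ℝ) = Real.sqrt 1 := Real.sqrt_one.symm
        _ ≤ Real.sqrt (α/β) := Real.sqrt_le_sqrt h1
        _ ≤ _ := le_max_right _ _
  have hC₁max : 2 * max α β ≤ C₁ := by rw [hC₁]; nlinarith
  have hC₁pos : 0 < C₁ := lt_of_lt_of_le (by positivity) hC₁max
  have hab : (0:ℝ) < α*β := by positivity
  have hsab : Real.sqrt (α*β) ≤ max α β := by
    have h1 : α*β ≤ (max α β)^2 := by
      nlinarith [le_max_left α β, le_max_right α β, hα.le, hβ.le]
    calc Real.sqrt (α*β) ≤ Real.sqrt ((max α β)^2) := Real.sqrt_le_sqrt h1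
      _ = max α β := Real.sqrt_sq hmaxpos.le
  have hspos : 0 < Real.sqrt (α*β) := Real.sqrt_pos.2 hab
  have hC₂2 : 2 ≤ C₂ := by
    have hrw : (α*β) ^ ((-(1:ℝ))/2) = (Real.sqrt (α*β))⁻¹ := by
      rw [show ((-(1:ℝ))/2) = -(1/2 : ℝ) from by norm_num, Real.rpow_neg hab.le,
        ← Real.sqrt_eq_rpow]
    rw [hC₂, hrw, ← div_eq_mul_inv, le_div_iff₀ hspos]
    calc 2 * Real.sqrt (α*β) ≤ 2 * max α β := by linarith
      _ ≤ C₁ := hC₁max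
  have hci : ∀ k : ℤ, (if Even k then 2*β else 2*α) ≤ C₁ := by
    intro k
    have h1 := le_max_left α β
    have h2 := le_max_right α β
    split_ifs <;> linarith
  -- the row bound
  have hrow := row_bound α β hα hβ C₁ hC₁pos hci t ht
  have hx : (0:ℝ) ≤ α*β*t^2 := by positivity
  have he1 : (1:ℝ) ≤ Real.exp (α*β*t^2) := Real.one_le_exp hx
  have hbound : ∀ i : ℤ, (∑' j : ℤ, matExp α β t i j) ≤ C₃ t := by
    intro i
    refine le_trans (hrow i).2 ?_
    rw [hC₃ t]
    set x : ℝ := α*β*t^2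
    set e : ℝ := Real.exp x
    have h4x2 : (0:ℝ) ≤ 4*x+2 := by linarith
    have he0 : (0:ℝ) ≤ e := by linarith
    have hp1 : 0 ≤ (C₂-2)*(4*x+2)*e :=
      mul_nonneg (mul_nonneg (by linarith) h4x2) he0
    have hp2 : 0 ≤ C₁*t^2*(4*x+2)*e := by positivity
    have hp3 : 2*(e-1) ≤ C₂*(e-1) :=
      mul_le_mul_of_nonneg_right hC₂2 (by linarith)
    have hp4 : 0 ≤ x*e := mul_nonneg hx he0
    have hexp : (C₂ + C₁*t^2)*(4*x+2)*e
        = (C₂-2)*(4*x+2)*e + C₁*t^2*(4*x+2)*e + (8*x+4)*e := by ring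
    have h4xeq : 4*α*β*t^2 = 4*x := by ring
    rw [h4xeq, hexp]
    nlinarith [hp1, hp2, hp3, hp4, he1]
  have hexp_nonneg : ∀ i j : ℤ, 0 ≤ matExp α β t i j := by
    intro i j
    apply tsum_nonneg
    intro n
    have := matApow_nonneg hα.le hβ.le n i j
    positivity
  refine ⟨fun i => ⟨(hrow i).1, hbound i⟩, ?_⟩
  rintro φ ⟨M, hM⟩
  have hM0 : 0 ≤ M := le_trans (abs_nonneg _) (hM 0)
  have habs : ∀ i : ℤ, ∀ j : ℤ, |matExp α β t i j * φ j| ≤ matExp α β t i j * M := by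
    intro i j
    rw [abs_mul, abs_of_nonneg (hexp_nonneg i j)]
    exact mul_le_mul_of_nonneg_left (hM j) (hexp_nonneg i j)
  have hsummul : ∀ i : ℤ, Summable (fun j : ℤ => matExp α β t i j * φ j) := by
    intro i
    have hs : Summable (fun j : ℤ => matExp α β t i j * M) := (hrow i).1.mul_right M
    have habs' : Summable fun j : ℤ => |matExp α β t i j * φ j| :=
      Summable.of_nonneg_of_le (fun j => abs_nonneg _) (habs i) hs
    exact habs'.of_abs
  refine ⟨hsummul, ⟨C₃ t * M, ?_⟩⟩
  intro i
  have hs : Summable (fun j : ℤ => matExp α β t i j * M) := (hrow i).1.mul_right M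
  have habs' : Summable fun j : ℤ => |matExp α β t i j * φ j| :=
    Summable.of_nonneg_of_le (fun j => abs_nonneg _) (habs i) hs
  have habs'' : Summable fun j : ℤ => ‖matExp α β t i j * φ j‖ := by
    simpa only [Real.norm_eq_abs] using habs'
  have hstep1 : |∑' j : ℤ, matExp α β t i j * φ j|
      ≤ ∑' j : ℤ, |matExp α β t i j * φ j| := by
    have h1 := norm_tsum_le_tsum_norm habs''
    simpa only [Real.norm_eq_abs] using h1
  calc |∑' j : ℤ, matExp α β t i j * φ j|
      ≤ ∑' j : ℤ, |matExp α β t i j * φ j| := hstep1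
    _ ≤ ∑' j : ℤ, matExp α β t i j * M := Summable.tsum_le_tsum (habs i) habs' hs
    _ = (∑' j : ℤ, matExp α β t i j) * M := by rw [tsum_mul_right]
    _ ≤ C₃ t * M := mul_le_mul_of_nonneg_right (hbound i) hM0
end

section
/- Suppose r ≥ 2β + γ. Then for every η > 0 one has r > Γ(η), the spreading speed c*(η) is decreasing in η on (0, ∞), and lim_{η → ∞} c*(η) = 0. -/
set_option maxHeartbeats 1000000



open Real

/-- upper bound on the root -/
lemma rootUpper {α β γ τ r A η l : ℝ} (hβ : 0 < β) (hγ : 0 < γ) (hr : 0 < r) (hτ : 0 ≤ τ)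
    (hA : 0 ≤ A) (hη : 0 < 2*α + η) (hl : 0 < l)
    (e1 : -(l + 2*β + γ) + A/(l + 2*α + η) + r * Real.exp (-l*τ) = 0) :
    l ≤ A/(2*α+η) + r := by
  have hD : 0 < l + 2*α + η := by linarith
  have h1 : A/(l+2*α+η) ≤ A/(2*α+η) := by gcongr; linarith
  have h2 : Real.exp (-l*τ) ≤ 1 := by
    rw [show (1:ℝ) = Real.exp 0 by simp]
    exact Real.exp_le_exp.mpr (by nlinarith)
  nlinarith

/-- weak comparison: bigger η and smaller A forces smaller-or-equal root -/
lemma rootCompLe {α β γ τ r A1 A2 η1 η2 l1 l2 : ℝ} (hβ : 0 < β) (hγ : 0 < γ) (hr : 0 < r) (hτ : 0 ≤ τ)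
    (hA1 : 0 < A1) (hA : A1 ≤ A2) (hη2 : 0 < 2*α + η2) (hη : η2 ≤ η1)
    (hl1 : 0 < l1) (hl2 : 0 < l2)
    (e1 : -(l1 + 2*β + γ) + A1/(l1 + 2*α + η1) + r * Real.exp (-l1*τ) = 0)
    (e2 : -(l2 + 2*β + γ) + A2/(l2 + 2*α + η2) + r * Real.exp (-l2*τ) = 0) :
    l1 ≤ l2 := by
  by_contra h
  push_neg at h
  have hD2 : 0 < l2 + 2*α + η2 := by linarith
  have hdiv : A1/(l1+2*α+η1) ≤ A2/(l2+2*α+η2) := by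
    apply div_le_div₀ (by linarith) hA hD2 (by linarith)
  have hexp : Real.exp (-l1*τ) ≤ Real.exp (-l2*τ) := Real.exp_le_exp.mpr (by nlinarith)
  nlinarith

/-- strict comparison in η (same A) -/
lemma rootCompLt {α β γ τ r A η1 η2 l1 l2 : ℝ} (hβ : 0 < β) (hγ : 0 < γ) (hr : 0 < r) (hτ : 0 ≤ τ)
    (hA : 0 < A) (hη2 : 0 < 2*α + η2) (hη : η2 < η1)
    (hl1 : 0 < l1) (hl2 : 0 < l2)
    (e1 : -(l1 + 2*β + γ) + A/(l1 + 2*α + η1) + r * Real.exp (-l1*τ) = 0)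
    (e2 : -(l2 + 2*β + γ) + A/(l2 + 2*α + η2) + r * Real.exp (-l2*τ) = 0) :
    l1 < l2 := by
  by_contra h
  push_neg at h
  have hD2 : 0 < l2 + 2*α + η2 := by linarith
  have hdiv : A/(l1+2*α+η1) < A/(l2+2*α+η2) :=
    div_lt_div_of_pos_left hA hD2 (by linarith)
  have hexp : Real.exp (-l1*τ) ≤ Real.exp (-l2*τ) := Real.exp_le_exp.mpr (by nlinarith)
  nlinarith

/-- lower bound: root grows like sqrt A -/
lemma rootLower {α β γ τ r A η l : ℝ} (hβ : 0 < β) (hγ : 0 < γ) (hr : 0 < r) (hτ : 0 ≤ τ)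
    (hα : 0 < α) (hη : 0 < η) (hA : 0 ≤ A) (hl : 0 < l)
    (e1 : -(l + 2*β + γ) + A/(l + 2*α + η) + r * Real.exp (-l*τ) = 0) :
    Real.sqrt A ≤ l + (2*β + γ + 2*α + η) := by
  have hD : 0 < l + 2*α + η := by linarith
  have hE : 0 < r * Real.exp (-l*τ) := mul_pos hr (Real.exp_pos _)
  have h1 : A/(l+2*α+η) < l + 2*β + γ := by linarith
  have h2 : A < (l+2*β+γ)*(l+2*α+η) := by
    rw [div_lt_iff₀ hD] at h1; linarith
  have h3 : A ≤ (l + (2*β+γ+2*α+η))^2 := by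
    nlinarith [mul_pos (show (0:ℝ) < 2*β+γ by linarith) (show (0:ℝ) < 2*α+η by linarith),
      sq_nonneg (2*β+γ), sq_nonneg (2*α+η),
      mul_nonneg hl.le (show (0:ℝ) ≤ 2*β+γ+2*α+η by linarith)]
  calc Real.sqrt A ≤ Real.sqrt ((l + (2*β+γ+2*α+η))^2) := Real.sqrt_le_sqrt h3
    _ = l + (2*β+γ+2*α+η) := Real.sqrt_sq (by positivity)

/-- quantitative gap between roots at η1 < η2 -/
lemma rootGap {α β γ τ r A η1 η2 l1 l2 Λ : ℝ} (hα : 0 < α) (hβ : 0 < β) (hγ : 0 < γ)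
    (hr : 0 < r) (hτ : 0 ≤ τ)
    (hA : 4*α*β ≤ A) (hη1 : 0 < η1) (hη : η1 < η2)
    (hl2 : 0 < l2) (hl21 : l2 < l1) (hΛ : l1 ≤ Λ)
    (e1 : -(l1 + 2*β + γ) + A/(l1 + 2*α + η1) + r * Real.exp (-l1*τ) = 0)
    (e2 : -(l2 + 2*β + γ) + A/(l2 + 2*α + η2) + r * Real.exp (-l2*τ) = 0) :
    min ((η2-η1)/2) (2*α*β*(η2-η1)/((1+r*τ)*(Λ+2*α+η2)^2)) ≤ l1 - l2 := by
  have hD1 : 0 < l1 + 2*α + η1 := by linarith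
  have hD2 : 0 < l2 + 2*α + η2 := by linarith
  have hrτ : 0 ≤ r*τ := mul_nonneg hr.le hτ
  set E1 := Real.exp (-l1*τ) with hE1def
  set E2 := Real.exp (-l2*τ) with hE2def
  have hE1pos : 0 < E1 := Real.exp_pos _
  have hE2pos : 0 < E2 := Real.exp_pos _
  have hA1 : A = (l1 + 2*β + γ - r*E1) * (l1+2*α+η1) := by
    have h : A/(l1+2*α+η1) = l1 + 2*β + γ - r*E1 := by linarith
    rw [div_eq_iff (ne_of_gt hD1)] at h; linarith [h]
  have hA2 : A = (l2 + 2*β + γ - r*E2) * (l2+2*α+η2) := by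
    have h : A/(l2+2*α+η2) = l2 + 2*β + γ - r*E2 := by linarith
    rw [div_eq_iff (ne_of_gt hD2)] at h; linarith [h]
  have key : (l1 - l2 - r*(E1-E2)) * ((l1+2*α+η1)*(l2+2*α+η2))
      = A * ((η2-η1) - (l1-l2)) := by
    linear_combination (l1+2*α+η1) * hA2 - (l2+2*α+η2) * hA1
  -- exp Lipschitz bound
  have hdτ : 0 ≤ (l1-l2)*τ := mul_nonneg (by linarith) hτ
  have hexp : E2 - E1 ≤ (l1 - l2)*τ := by
    have heq : E1 = E2 * Real.exp (-((l1-l2)*τ)) := by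
      rw [hE1def, hE2def, ← Real.exp_add]; ring_nf
    have h1 : 1 - (l1-l2)*τ ≤ Real.exp (-((l1-l2)*τ)) := by
      have := Real.add_one_le_exp (-((l1-l2)*τ)); linarith
    have hE2le : E2 ≤ 1 := by
      rw [hE2def, show (1:ℝ) = Real.exp 0 by simp]
      exact Real.exp_le_exp.mpr (by nlinarith)
    calc E2 - E1 = E2 * (1 - Real.exp (-((l1-l2)*τ))) := by rw [heq]; ring
      _ ≤ E2 * ((l1-l2)*τ) := mul_le_mul_of_nonneg_left (by linarith) hE2pos.le
      _ ≤ 1 * ((l1-l2)*τ) := mul_le_mul_of_nonneg_right hE2le hdτ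
      _ = (l1-l2)*τ := one_mul _
  clear_value E1 E2
  have h1 : l1 - l2 - r*(E1-E2) ≤ (l1-l2)*(1+r*τ) := by
    have := mul_le_mul_of_nonneg_left hexp hr.le
    nlinarith [this]
  have h2 := mul_le_mul_of_nonneg_right h1 (mul_pos hD1 hD2).le
  have step : A * ((η2-η1)-(l1-l2)) ≤ (l1-l2)*(1+r*τ) * ((l1+2*α+η1)*(l2+2*α+η2)) := by
    linarith [key, h2]
  rcases le_or_gt ((η2-η1)/2) (l1-l2) with hc | hc
  · exact le_trans (min_le_left _ _) hc
  · refine le_trans (min_le_right _ _) ?_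
    have hΛpos : 0 < Λ + 2*α + η2 := by linarith
    have hDle : (l1+2*α+η1)*(l2+2*α+η2) ≤ (Λ+2*α+η2)^2 := by
      rw [sq]
      exact mul_le_mul (by linarith) (by linarith) hD2.le (by linarith)
    have hAd : 2*α*β*(η2-η1) ≤ A * ((η2-η1)-(l1-l2)) := by
      have hx : (η2-η1)/2 ≤ (η2-η1)-(l1-l2) := by linarith
      have hA0 : (0:ℝ) ≤ A := by linarith [mul_pos hα hβ]
      have := mul_le_mul hA hx (by linarith) hA0
      linarith [this]
    have hpos : 0 ≤ (l1-l2)*(1+r*τ) := mul_nonneg (by linarith) (by linarith)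
    have h5 := mul_le_mul_of_nonneg_left hDle hpos
    have hmain : 2*α*β*(η2-η1) ≤ (l1-l2)*(1+r*τ)*(Λ+2*α+η2)^2 := by linarith
    rw [div_le_iff₀ (by positivity)]
    linarith [hmain]

lemma coshsq_ge (μ : ℝ) : 4 ≤ (Real.exp μ + Real.exp (-μ))^2 := by
  have h : Real.exp μ * Real.exp (-μ) = 1 := by rw [← Real.exp_add]; simp
  nlinarith [sq_nonneg (Real.exp μ - Real.exp (-μ))]

lemma coshsq_mono {μ1 μ2 : ℝ} (h0 : 0 ≤ μ1) (h : μ1 ≤ μ2) :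
    (Real.exp μ1 + Real.exp (-μ1))^2 ≤ (Real.exp μ2 + Real.exp (-μ2))^2 := by
  have e1 : Real.exp μ1 * Real.exp (-μ1) = 1 := by rw [← Real.exp_add]; simp
  have e2 : Real.exp μ2 * Real.exp (-μ2) = 1 := by rw [← Real.exp_add]; simp
  have hb1 : Real.exp (-μ1) ≤ 1 := Real.exp_le_one_iff.mpr (by linarith)
  have hb2 : Real.exp (-μ2) ≤ 1 := Real.exp_le_one_iff.mpr (by linarith)
  have ha : Real.exp μ1 ≤ Real.exp μ2 := Real.exp_le_exp.mpr h
  have ha1 : 1 ≤ Real.exp μ1 := Real.one_le_exp h0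
  have key : 0 ≤ (Real.exp μ2 - Real.exp μ1) * (Real.exp μ1 * Real.exp μ2 - 1) :=
    mul_nonneg (by linarith) (by nlinarith)
  have m1 : Real.exp μ2 * (Real.exp μ1 * Real.exp (-μ1)) = Real.exp μ2 := by rw [e1]; ring
  have m2 : Real.exp μ1 * (Real.exp μ2 * Real.exp (-μ2)) = Real.exp μ1 := by rw [e2]; ring
  have hsum : Real.exp μ1 + Real.exp (-μ1) ≤ Real.exp μ2 + Real.exp (-μ2) := by
    nlinarith [key, m1, m2, mul_pos (Real.exp_pos μ1) (Real.exp_pos μ2)]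
  have hp : 0 ≤ Real.exp μ1 + Real.exp (-μ1) := by positivity
  nlinarith

lemma coshsq_le (μ : ℝ) (h0 : 0 ≤ μ) : (Real.exp μ + Real.exp (-μ))^2 ≤ 4 * Real.exp (2*μ) := by
  have hb : Real.exp (-μ) ≤ Real.exp μ := Real.exp_le_exp.mpr (by linarith)
  have h2 : Real.exp (2*μ) = Real.exp μ * Real.exp μ := by rw [← Real.exp_add]; ring_nf
  nlinarith [Real.exp_pos μ, Real.exp_pos (-μ)]

lemma exp_ge_quarter_sq (μ : ℝ) (h0 : 0 ≤ μ) : 1 + μ + μ^2/4 ≤ Real.exp μ := by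
  have h := Real.add_one_le_exp (μ/2)
  have h2 : Real.exp μ = Real.exp (μ/2) * Real.exp (μ/2) := by rw [← Real.exp_add]; ring_nf
  nlinarith [Real.exp_pos (μ/2)]


/-- Let `α, β, γ > 0`, `τ ≥ 0` and `r ≥ 2β + γ` (with `r > γ`).  For
`η > 0` and `μ ≥ 0` let `lam μ η` be the unique positive root of
`F(λ, μ, η) = −(λ + 2β + γ) + αβ(e^μ + e^{−μ})²/(λ + 2α + η) + r e^{−λτ} = 0`, and let
`c*(η) = inf_{μ>0} lam μ η / μ`.  Then `r > Γ(η) = γ + 2βη/(2α+η)` for every `η > 0`,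
`c*` is decreasing on `(0, ∞)`, and `c*(η) → 0` as `η → ∞`. -/
theorem speed_decreasing_in_bad_mortality_supercritical
    (α β γ τ r : ℝ)
    (hα : 0 < α) (hβ : 0 < β) (hγ : 0 < γ) (hτ : 0 ≤ τ)
    (hr : γ < r) (hr2 : 2 * β + γ ≤ r)
    (lam : ℝ → ℝ → ℝ)
    (hlam : ∀ η : ℝ, 0 < η → ∀ μ : ℝ, 0 ≤ μ → 0 < lam μ η ∧
      -(lam μ η + 2 * β + γ)
        + α * β * (Real.exp μ + Real.exp (-μ)) ^ 2 / (lam μ η + 2 * α + η)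
        + r * Real.exp (-(lam μ η) * τ) = 0)
    (cstar : ℝ → ℝ)
    (hcstar : ∀ η : ℝ, 0 < η →
      cstar η = sInf {c : ℝ | ∃ μ : ℝ, 0 < μ ∧ c = lam μ η / μ}) :
    (∀ η : ℝ, 0 < η → γ + 2 * β * η / (2 * α + η) < r) ∧
    StrictAntiOn cstar (Set.Ioi 0) ∧
    Filter.Tendsto cstar Filter.atTop (nhds 0) := by
  have hr0 : 0 < r := lt_trans hγ hr
  have hApos : ∀ μ : ℝ, 0 < α * β * (Real.exp μ + Real.exp (-μ)) ^ 2 := fun μ => by positivity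
  have hA4 : ∀ μ : ℝ, 4*α*β ≤ α * β * (Real.exp μ + Real.exp (-μ)) ^ 2 := fun μ => by
    nlinarith [coshsq_ge μ, mul_pos hα hβ]
  -- generic facts about cstar
  have hSne : ∀ η : ℝ, Set.Nonempty {c : ℝ | ∃ μ : ℝ, 0 < μ ∧ c = lam μ η / μ} :=
    fun η => ⟨lam 1 η / 1, 1, one_pos, rfl⟩
  have hSbdd : ∀ η : ℝ, 0 < η → BddBelow {c : ℝ | ∃ μ : ℝ, 0 < μ ∧ c = lam μ η / μ} := by
    intro η hη
    refine ⟨0, ?_⟩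
    rintro c ⟨μ, hμ, rfl⟩
    exact div_nonneg (hlam η hη μ hμ.le).1.le hμ.le
  have hub : ∀ η : ℝ, 0 < η → ∀ μ : ℝ, 0 < μ → cstar η ≤ lam μ η / μ := by
    intro η hη μ hμ
    rw [hcstar η hη]
    exact csInf_le (hSbdd η hη) ⟨μ, hμ, rfl⟩
  have hlb : ∀ η : ℝ, 0 < η → ∀ b : ℝ, (∀ μ : ℝ, 0 < μ → b ≤ lam μ η / μ) → b ≤ cstar η := by
    intro η hη b hb
    rw [hcstar η hη]
    refine le_csInf (hSne η) ?_
    rintro c ⟨μ, hμ, rfl⟩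
    exact hb μ hμ
  have hc0nonneg : ∀ η : ℝ, 0 < η → 0 ≤ cstar η := fun η hη =>
    hlb η hη 0 (fun μ hμ => div_nonneg (hlam η hη μ hμ.le).1.le hμ.le)
  refine ⟨?_, ?_, ?_⟩
  · -- Part 1
    intro η hη
    have h2b : 2*β*η/(2*α+η) < 2*β := by
      rw [div_lt_iff₀ (by linarith)]
      nlinarith
    linarith
  · -- Part 2 : strict antitonicity
    intro η1 hη1' η2 hη2' hlt
    simp only [Set.mem_Ioi] at hη1' hη2'
    have hη1 : 0 < η1 := hη1'
    have hη2 : 0 < η2 := hη2'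
    have hlamlt : ∀ μ : ℝ, 0 ≤ μ → lam μ η2 < lam μ η1 := by
      intro μ hμ
      obtain ⟨hp2, he2⟩ := hlam η2 hη2 μ hμ
      obtain ⟨hp1, he1⟩ := hlam η1 hη1 μ hμ
      exact rootCompLt hβ hγ hr0 hτ (hApos μ) (by linarith) hlt hp2 hp1 he2 he1
    have hmono2 : cstar η2 ≤ cstar η1 := by
      apply hlb η1 hη1
      intro μ hμ
      calc cstar η2 ≤ lam μ η2 / μ := hub η2 hη2 μ hμ
        _ ≤ lam μ η1 / μ := by gcongr; exact (hlamlt μ hμ.le).le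
    set c0 : ℝ := lam 1 η1 with hc0def
    have hc0pos : 0 < c0 := (hlam η1 hη1 1 one_pos.le).1
    have hc0 : cstar η1 ≤ c0 := by
      have := hub η1 hη1 1 one_pos
      simpa using this
    set K : ℝ := 2*β+γ+2*α+η2 with hKdef
    have hKpos : 0 < K := by rw [hKdef]; linarith
    set s : ℝ := Real.sqrt (α*β) with hsdef
    have hs : 0 < s := Real.sqrt_pos.mpr (by positivity)
    set M : ℝ := max 1 (4*(K+c0+2)/s) with hMdef
    have hM1 : (1:ℝ) ≤ M := le_max_left _ _
    have hMpos : 0 < M := by linarith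
    have hsM : 4*(K+c0+2) ≤ s*M := by
      have hM2 : 4*(K+c0+2)/s ≤ M := le_max_right _ _
      rw [div_le_iff₀ hs] at hM2
      linarith
    set Λ : ℝ := lam M η1 with hΛdef
    have hΛposE := hlam η1 hη1 M hMpos.le
    have hΛ : ∀ μ : ℝ, 0 < μ → μ ≤ M → lam μ η1 ≤ Λ := by
      intro μ hμ hμM
      obtain ⟨hp, he⟩ := hlam η1 hη1 μ hμ.le
      refine rootCompLe hβ hγ hr0 hτ (hApos μ) ?_ (by linarith) (le_refl η1) hp hΛposE.1 he hΛposE.2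
      exact mul_le_mul_of_nonneg_left (coshsq_mono hμ.le hμM) (by positivity)
    set δ : ℝ := min ((η2-η1)/2) (2*α*β*(η2-η1)/((1+r*τ)*(Λ+2*α+η2)^2)) with hδdef
    have hden : 0 < (1+r*τ)*(Λ+2*α+η2)^2 := by
      have h1 : 0 < 1 + r*τ := by nlinarith [mul_nonneg hr0.le hτ]
      have h2 : 0 < (Λ+2*α+η2)^2 := pow_pos (by linarith [hΛposE.1]) 2
      exact mul_pos h1 h2
    have hδ : 0 < δ := by
      refine lt_min (by linarith) (div_pos ?_ hden)
      have := mul_pos (mul_pos (mul_pos two_pos hα) hβ) (show (0:ℝ) < η2 - η1 by linarith)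
      linarith
    clear_value c0 K s M Λ δ
    have hgap : ∀ μ : ℝ, 0 < μ → μ ≤ M → δ ≤ lam μ η1 - lam μ η2 := by
      intro μ hμ hμM
      obtain ⟨hp1, he1⟩ := hlam η1 hη1 μ hμ.le
      obtain ⟨hp2, he2⟩ := hlam η2 hη2 μ hμ.le
      rw [hδdef]
      exact rootGap hα hβ hγ hr0 hτ (hA4 μ) hη1 hlt hp2 (hlamlt μ hμ.le) (hΛ μ hμ hμM) he1 he2
    have hbig : ∀ μ : ℝ, M < μ → c0 + 1 ≤ lam μ η1 / μ := by
      intro μ hμM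
      have hμ : 0 < μ := lt_of_le_of_lt (by linarith) hμM
      obtain ⟨hp, he⟩ := hlam η1 hη1 μ hμ.le
      have hsq := rootLower (α := α) hβ hγ hr0 hτ hα hη1 (hApos μ).le hp he
      have h1 : s * Real.exp μ ≤ Real.sqrt (α*β*(Real.exp μ + Real.exp (-μ))^2) := by
        have heq : s * Real.exp μ = Real.sqrt (α*β*(Real.exp μ)^2) := by
          rw [Real.sqrt_mul (by positivity) ((Real.exp μ)^2),
            Real.sqrt_sq (Real.exp_pos μ).le, hsdef]
        rw [heq]
        apply Real.sqrt_le_sqrt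
        have : (Real.exp μ)^2 ≤ (Real.exp μ + Real.exp (-μ))^2 := by
          nlinarith [Real.exp_pos μ, Real.exp_pos (-μ)]
        nlinarith [mul_pos hα hβ]
      have h2 : s * Real.exp μ ≤ lam μ η1 + K := by
        have : 2*β+γ+2*α+η1 ≤ K := by rw [hKdef]; linarith
        linarith
      have hexpμ := exp_ge_quarter_sq μ hμ.le
      have h3 : K + (c0+1)*μ ≤ s*Real.exp μ := by
        have e1 : s*(μ^2/4) ≤ s*Real.exp μ := mul_le_mul_of_nonneg_left (by nlinarith) hs.le
        have e2 : (K+c0+2)*μ ≤ s*(μ^2/4) := by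
          have t1 : 0 ≤ s*(μ-M)*μ :=
            mul_nonneg (mul_nonneg hs.le (by linarith)) hμ.le
          have t2 : 4*(K+c0+2)*μ ≤ s*M*μ :=
            mul_le_mul_of_nonneg_right hsM hμ.le
          nlinarith [t1, t2]
        have e3 : K + (c0+1)*μ ≤ (K+c0+2)*μ := by
          nlinarith [mul_nonneg hKpos.le (sub_nonneg.mpr (show (1:ℝ) ≤ μ by linarith))]
        linarith
      rw [le_div_iff₀ hμ]
      linarith
    set δ' : ℝ := min (δ/M) 1 with hδ'def
    have hδ'pos : 0 < δ' := lt_min (div_pos hδ hMpos) one_pos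
    have hfinal : cstar η2 + δ' ≤ cstar η1 := by
      apply hlb η1 hη1
      intro μ hμ
      rcases le_or_gt μ M with h | h
      · have hg := hgap μ hμ h
        have h1 : cstar η2 ≤ lam μ η2 / μ := hub η2 hη2 μ hμ
        have h2 : δ' ≤ δ/μ := by
          refine le_trans (min_le_left _ _) ?_
          gcongr
        have h3 : lam μ η2/μ + δ/μ ≤ lam μ η1/μ := by
          rw [← add_div]
          gcongr
          linarith
        linarith
      · have hB := hbig μ h
        have hd1 : δ' ≤ 1 := min_le_right _ _
        linarith
    linarith
  · -- Part 3 : limit 0 at infinity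
    have hupper : ∀ η : ℝ, Real.exp 2 ≤ η → cstar η ≤ 2*(4*α*β + r)/Real.log η := by
      intro η hη
      have hη0 : (0:ℝ) < η := lt_of_lt_of_le (Real.exp_pos 2) hη
      have hlog2 : 2 ≤ Real.log η := (Real.le_log_iff_exp_le hη0).mpr hη
      have hlogpos : 0 < Real.log η := by linarith
      set μ : ℝ := Real.log η / 2 with hμdef
      have hμpos : 0 < μ := by rw [hμdef]; linarith
      obtain ⟨hp, he⟩ := hlam η hη0 μ hμpos.le
      have hupperlam := rootUpper (α := α) hβ hγ hr0 hτ (hApos μ).le (by linarith) hp he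
      have hA : α*β*(Real.exp μ + Real.exp (-μ))^2 ≤ 4*α*β*η := by
        have h1 := coshsq_le μ hμpos.le
        have h2 : Real.exp (2*μ) = η := by
          rw [hμdef, show 2*(Real.log η / 2) = Real.log η by ring]
          exact Real.exp_log hη0
        calc α*β*(Real.exp μ + Real.exp (-μ))^2
            ≤ α*β*(4*Real.exp (2*μ)) := mul_le_mul_of_nonneg_left h1 (by positivity)
          _ = 4*α*β*η := by rw [h2]; ring
      have hdiv : (α*β*(Real.exp μ + Real.exp (-μ))^2)/(2*α+η) ≤ 4*α*β := by
        rw [div_le_iff₀ (by linarith)]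
        nlinarith [mul_pos (mul_pos hα hβ) hα]
      have hlamle : lam μ η ≤ 4*α*β + r := by linarith
      calc cstar η ≤ lam μ η / μ := hub η hη0 μ hμpos
        _ ≤ (4*α*β + r)/μ := by gcongr
        _ = 2*(4*α*β+r)/Real.log η := by
            rw [hμdef, div_div_eq_mul_div]
            ring
    have htend : Filter.Tendsto (fun η : ℝ => 2*(4*α*β+r)/Real.log η) Filter.atTop (nhds 0) :=
      Filter.Tendsto.div_atTop tendsto_const_nhds Real.tendsto_log_atTop
    refine tendsto_of_tendsto_of_tendsto_of_le_of_le' tendsto_const_nhds htend ?_ ?_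
    · filter_upwards [Filter.eventually_ge_atTop (1:ℝ)] with η hη1
      exact hc0nonneg η (by linarith)
    · filter_upwards [Filter.eventually_ge_atTop (Real.exp 2)] with η hη
      exact hupper η hη
end
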